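/- Let (A,R) be a semisimple quasitriangular Hopf algebra, L a normal Hopf subalgebra of A, and L* := φ_R((A//L)*). Then every element of L commutes with every element of L*: ml = lm for all l ∈ L, m ∈ L*. -/

import Mathlib

open scoped TensorProduct
open Coalgebra

noncomputable section
namespace Burciu

variable (k : Type*) [Field k] (A : Type*) [Ring A] [HopfAlgebra k A]

/-- The left adjoint action, `adL (a ⊗ l) = a₁ * l * S(a₂)`. -/
def adL : A ⊗[k] A →ₗ[k] A :=
  (LinearMap.mul' k A) ∘ₗ
  (LinearMap.lTensor A (LinearMap.mul' k A)) ∘ₗ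
  (LinearMap.lTensor A (LinearMap.lTensor A (HopfAlgebra.antipode (R := k)))) ∘ₗ
  (LinearMap.lTensor A (TensorProduct.comm k A A).toLinearMap) ∘ₗ
  (TensorProduct.assoc k A A A).toLinearMap ∘ₗ
  (LinearMap.rTensor A (Coalgebra.comul (R := k)))

/-- The right adjoint action, `adR (a ⊗ l) = S(a₁) * l * a₂`. -/
def adR : A ⊗[k] A →ₗ[k] A :=
  (LinearMap.mul' k A) ∘ₗ
  (LinearMap.rTensor A (LinearMap.mul' k A)) ∘ₗ
  (TensorProduct.assoc k A A A).symm.toLinearMap ∘ₗ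
  (LinearMap.rTensor (A ⊗[k] A) (HopfAlgebra.antipode (R := k))) ∘ₗ
  (LinearMap.lTensor A (TensorProduct.comm k A A).toLinearMap) ∘ₗ
  (TensorProduct.assoc k A A A).toLinearMap ∘ₗ
  (LinearMap.rTensor A (Coalgebra.comul (R := k)))

variable {k A} in
/-- `L` is a left coideal subalgebra: `Δ(L) ⊆ A ⊗ L`. -/
def IsLeftCoideal (L : Subalgebra k A) : Prop :=
  ∀ l ∈ L, Coalgebra.comul (R := k) l ∈
    LinearMap.range (LinearMap.lTensor A (Subalgebra.toSubmodule L).subtype)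

variable {k A} in
/-- `L` is a left normal coideal subalgebra: a left coideal subalgebra closed
under the left adjoint action `a · l = a₁ l S(a₂)`. -/
def IsLNCS (L : Subalgebra k A) : Prop :=
  IsLeftCoideal L ∧ ∀ a : A, ∀ l ∈ L, adL k A (a ⊗ₜ[k] l) ∈ L

variable {k A} in
/-- `L` is a Hopf subalgebra: a subalgebra with `Δ(L) ⊆ L ⊗ L` and `S(L) ⊆ L`. -/
def IsHopfSubalgebra (L : Subalgebra k A) : Prop :=
  (∀ l ∈ L, Coalgebra.comul (R := k) l ∈
    LinearMap.range (TensorProduct.map (Subalgebra.toSubmodule L).subtype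
      (Subalgebra.toSubmodule L).subtype)) ∧
  ∀ l ∈ L, HopfAlgebra.antipode (R := k) l ∈ L

variable {k A} in
/-- `L` is a normal Hopf subalgebra: a Hopf subalgebra stable under both
adjoint actions. -/
def IsNormalHopfSubalgebra (L : Subalgebra k A) : Prop :=
  IsHopfSubalgebra L ∧ (∀ a : A, ∀ l ∈ L, adL k A (a ⊗ₜ[k] l) ∈ L) ∧
    (∀ a : A, ∀ l ∈ L, adR k A (a ⊗ₜ[k] l) ∈ L)

/-- The augmentation ideal `A L⁺`, where `L⁺ = L ∩ ker ε`. -/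
def ALplus (L : Subalgebra k A) : Submodule k A :=
  (⊤ : Submodule k A) *
    (Subalgebra.toSubmodule L ⊓ LinearMap.ker (Coalgebra.counit (R := k) (A := A)))

/-- The right hit action `a ↼ f = f(a₁) a₂`, as a linear endomorphism of `A`. -/
def hit (f : Module.Dual k A) : A →ₗ[k] A :=
  (TensorProduct.lid k A).toLinearMap ∘ₗ (LinearMap.rTensor A f) ∘ₗ (Coalgebra.comul (R := k))

/-- Convolution product on the dual `A*`. -/
def conv (f g : Module.Dual k A) : Module.Dual k A :=
  (LinearMap.mul' k k) ∘ₗ (TensorProduct.map f g) ∘ₗ (Coalgebra.comul (R := k))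

variable {k A} in
/-- The cocommutative elements of `A*`; for a semisimple Hopf algebra these are
exactly the span of the irreducible characters, i.e. the character ring `C(A)`. -/
def IsCocom (f : Module.Dual k A) : Prop := ∀ a b : A, f (a * b) = f (b * a)

variable {k A} in
/-- The Hopf subalgebra `(A//N)* = {f ∈ A* | f(al) = ε(l) f(a) ∀ a ∈ A, l ∈ N} ⊆ A*`
attached to a subspace `N ⊆ A`. -/
def dualQuot (N : Submodule k A) : Set (Module.Dual k A) :=
  {f | ∀ a : A, ∀ l ∈ N, f (a * l) = Coalgebra.counit (R := k) l * f a}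

/-- The axioms for an R-matrix making `(A, R)` quasitriangular. -/
structure IsRMatrix (R : A ⊗[k] A) : Prop where
  isUnit : IsUnit R
  quasi : ∀ x : A, R * (Coalgebra.comul (R := k) x) =
    (TensorProduct.comm k A A (Coalgebra.comul (R := k) x)) * R
  comul_left : LinearMap.rTensor A (Coalgebra.comul (R := k)) R =
    (LinearMap.rTensor A ((TensorProduct.mk k A A).flip 1) R) *
      (LinearMap.rTensor A (TensorProduct.mk k A A 1) R)
  comul_right : LinearMap.lTensor A (Coalgebra.comul (R := k)) R =
    (LinearMap.lTensor A (TensorProduct.mk k A A 1) R) *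
      (LinearMap.lTensor A ((TensorProduct.mk k A A).flip 1) R)
  counit_left : (TensorProduct.lid k A) (LinearMap.rTensor A (Coalgebra.counit (R := k)) R) = 1
  counit_right : (TensorProduct.rid k A) (LinearMap.lTensor A (Coalgebra.counit (R := k)) R) = 1

/-- The monodromy matrix `Q = R₂₁ R`. -/
def Qmat (R : A ⊗[k] A) : A ⊗[k] A := (TensorProduct.comm k A A R) * R

/-- The Drinfeld map `φ_R(f) = (f ⊗ id)(R₂₁ R)`. -/
def phiR (R : A ⊗[k] A) (f : Module.Dual k A) : A :=
  (TensorProduct.lid k A) (LinearMap.rTensor A f (Qmat k A R))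

/-- The second Drinfeld map `_Rφ(f) = (id ⊗ f)(R₂₁ R)`. -/
def phiR' (R : A ⊗[k] A) (f : Module.Dual k A) : A :=
  (TensorProduct.rid k A) (LinearMap.lTensor A f (Qmat k A R))

variable {k A} in
/-- The monodromy `c_{W,V} ∘ c_{V,W}`, i.e. the action of `Q = R₂₁R`, is the
identity on `V ⊗ W`: the two representations centralize each other. -/
def QactsTrivially {V W : Type*} [AddCommGroup V] [Module k V] [AddCommGroup W] [Module k W]
    (R : A ⊗[k] A) (ρ : A →ₐ[k] Module.End k V) (σ : A →ₐ[k] Module.End k W) : Prop :=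
  (TensorProduct.homTensorHomMap (RingHom.id k) V W V W)
    (TensorProduct.map ρ.toLinearMap σ.toLinearMap (Qmat k A R)) = LinearMap.id

variable {k A} in
/-- A subset of `A` acts through the counit in a representation; for a left
normal coideal subalgebra `L` this says the module lies in `Rep(A//L)`. -/
def ActsTriviallyOn {V : Type*} [AddCommGroup V] [Module k V]
    (ρ : A →ₐ[k] Module.End k V) (L : Set A) : Prop :=
  ∀ l ∈ L, ρ l = (Coalgebra.counit (R := k) l) • (1 : Module.End k V)

variable {k A} in
/-- The character of a finite-dimensional representation. -/
def char {V : Type*} [AddCommGroup V] [Module k V]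
    (ρ : A →ₐ[k] Module.End k V) : Module.Dual k A :=
  (LinearMap.trace k V) ∘ₗ ρ.toLinearMap

end Burciu
end

open Burciu
open scoped TensorProduct

section Helpers
open Coalgebra HopfAlgebra TensorProduct LinearMap

variable {k : Type*} [Field k] {A : Type*} [Ring A] [HopfAlgebra k A]

lemma repr_sum_counit_smul_right {a : A} {ι : Type*} (r : Coalgebra.Repr k a ι) :
    ∑ i ∈ r.index, counit (R := k) (r.left i) • r.right i = a := by
  have h := congrArg (TensorProduct.lid k A) (Coalgebra.sum_counit_tmul_eq r)
  rw [map_sum] at h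
  simp only [TensorProduct.lid_tmul] at h
  simpa using h

lemma repr_sum_counit_smul_left {a : A} {ι : Type*} (r : Coalgebra.Repr k a ι) :
    ∑ i ∈ r.index, counit (R := k) (r.right i) • r.left i = a := by
  have h := congrArg (TensorProduct.rid k A) (Coalgebra.sum_tmul_counit_eq r)
  rw [map_sum] at h
  simp only [TensorProduct.rid_tmul] at h
  simpa using h

lemma counit_antipode' (a : A) :
    counit (R := k) (HopfAlgebra.antipode (R := k) a) = counit (R := k) a := by
  have r := Coalgebra.Repr.arbitrary k a
  have h1 := congrArg (counit (R := k)) (HopfAlgebra.sum_antipode_mul_eq_algebraMap_counit r)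
  rw [map_sum] at h1
  simp only [Bialgebra.counit_mul, Bialgebra.counit_algebraMap] at h1
  have h2 : counit (R := k) (HopfAlgebra.antipode (R := k) a) =
      ∑ i ∈ r.index, counit (R := k) (r.right i) *
        counit (R := k) (HopfAlgebra.antipode (R := k) (r.left i)) := by
    conv_lhs => rw [← repr_sum_counit_smul_left r]
    simp only [map_sum, map_smul, smul_eq_mul]
  rw [h2, ← h1]
  exact Finset.sum_congr rfl fun i _ => mul_comm _ _

set_option synthInstance.maxHeartbeats 1000000 in
set_option maxHeartbeats 1000000 in
lemma adR_tmul_eq {a : A} {ι : Type*} (l : A) (r : Coalgebra.Repr k a ι) :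
    adR k A (a ⊗ₜ[k] l) =
      ∑ i ∈ r.index, HopfAlgebra.antipode (R := k) (r.left i) * (l * r.right i) := by
  rw [adR]
  simp only [LinearMap.coe_comp, Function.comp_apply, LinearEquiv.coe_coe,
    LinearMap.rTensor_tmul, ← r.eq, TensorProduct.sum_tmul, map_sum,
    TensorProduct.assoc_tmul, LinearMap.lTensor_tmul, TensorProduct.comm_tmul,
    TensorProduct.assoc_symm_tmul, LinearMap.mul'_apply, mul_assoc]

lemma counit_adR' (a l : A) :
    counit (R := k) (adR k A (a ⊗ₜ[k] l)) = counit (R := k) l * counit (R := k) a := by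
  have r := Coalgebra.Repr.arbitrary k a
  rw [adR_tmul_eq l r, map_sum]
  simp only [Bialgebra.counit_mul, counit_antipode']
  have h : ∑ i ∈ r.index, counit (R := k) (r.left i) * counit (R := k) (r.right i)
      = counit (R := k) a := by
    have := congrArg (counit (R := k)) (repr_sum_counit_smul_right r)
    simpa [map_sum, smul_eq_mul] using this
  rw [← h, Finset.mul_sum]
  exact Finset.sum_congr rfl fun i _ => mul_left_comm _ _ _

lemma mul_left_eq (l : A) {a : A} {ι : Type*} (r : Coalgebra.Repr k a ι) :
    l * a = ∑ i ∈ r.index, r.left i * adR k A (r.right i ⊗ₜ[k] l) := by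
  classical
  set r1 : ∀ i : ι, Coalgebra.Repr k (r.left i) (A × A) :=
    fun i => Coalgebra.Repr.arbitrary k (r.left i) with hr1
  set r2 : ∀ i : ι, Coalgebra.Repr k (r.right i) (A × A) :=
    fun i => Coalgebra.Repr.arbitrary k (r.right i) with hr2
  have hco := Coalgebra.sum_tmul_tmul_eq r r1 r2
  set T : A ⊗[k] (A ⊗[k] A) →ₗ[k] A :=
    LinearMap.mul' k A ∘ₗ LinearMap.lTensor A
      (LinearMap.mul' k A ∘ₗ TensorProduct.map (HopfAlgebra.antipode (R := k))
        (LinearMap.mulLeft k l)) with hT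
  have hT' : ∀ x y z : A, T (x ⊗ₜ[k] (y ⊗ₜ[k] z)) =
      x * (HopfAlgebra.antipode (R := k) y * (l * z)) := by
    intro x y z
    simp [hT]
  have hTeq := congrArg T hco
  simp only [map_sum, hT'] at hTeq
  have hLHS : ∑ i ∈ r.index, ∑ j ∈ (r1 i).index,
      (r1 i).left j * (HopfAlgebra.antipode (R := k) ((r1 i).right j) * (l * r.right i))
      = l * a := by
    have step1 : ∀ i ∈ r.index, ∑ j ∈ (r1 i).index,
        (r1 i).left j * (HopfAlgebra.antipode (R := k) ((r1 i).right j) * (l * r.right i))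
        = counit (R := k) (r.left i) • (l * r.right i) := by
      intro i _
      have : ∑ j ∈ (r1 i).index,
          (r1 i).left j * (HopfAlgebra.antipode (R := k) ((r1 i).right j) * (l * r.right i))
          = (∑ j ∈ (r1 i).index,
              (r1 i).left j * HopfAlgebra.antipode (R := k) ((r1 i).right j)) * (l * r.right i) := by
        rw [Finset.sum_mul]
        exact Finset.sum_congr rfl fun j _ => (mul_assoc _ _ _).symm
      rw [this, HopfAlgebra.sum_mul_antipode_eq_smul (r1 i), smul_mul_assoc, one_mul]
    rw [Finset.sum_congr rfl step1]
    have : ∑ i ∈ r.index, counit (R := k) (r.left i) • (l * r.right i)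
        = l * ∑ i ∈ r.index, counit (R := k) (r.left i) • r.right i := by
      rw [Finset.mul_sum]
      exact Finset.sum_congr rfl fun i _ => (mul_smul_comm _ _ _).symm
    rw [this, repr_sum_counit_smul_right r]
  have hRHS : ∑ i ∈ r.index, ∑ j ∈ (r2 i).index,
      r.left i * (HopfAlgebra.antipode (R := k) ((r2 i).left j) * (l * (r2 i).right j))
      = ∑ i ∈ r.index, r.left i * adR k A (r.right i ⊗ₜ[k] l) := by
    refine Finset.sum_congr rfl fun i _ => ?_
    rw [adR_tmul_eq l (r2 i), Finset.mul_sum]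
  rw [← hLHS, hTeq, hRHS]

lemma dualQuot_mul_left {L : Subalgebra k A}
    (hadR : ∀ a : A, ∀ x ∈ L, adR k A (a ⊗ₜ[k] x) ∈ L)
    {f : Module.Dual k A} (hf : f ∈ dualQuot (Subalgebra.toSubmodule L))
    {l : A} (hl : l ∈ L) (a : A) :
    f (l * a) = counit (R := k) l * f a := by
  have r := Coalgebra.Repr.arbitrary k a
  rw [mul_left_eq l r, map_sum]
  have hterm : ∀ i ∈ r.index, f (r.left i * adR k A (r.right i ⊗ₜ[k] l)) =
      counit (R := k) l * (counit (R := k) (r.right i) * f (r.left i)) := by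
    intro i _
    rw [hf (r.left i) _ ((Subalgebra.mem_toSubmodule _).mpr (hadR (r.right i) l hl)),
      counit_adR', mul_assoc]
  rw [Finset.sum_congr rfl hterm, ← Finset.mul_sum]
  congr 1
  have := congrArg f (repr_sum_counit_smul_left r)
  simpa [map_sum, smul_eq_mul] using this

lemma comm_mul' (x y : A ⊗[k] A) :
    TensorProduct.comm k A A (x * y) =
      TensorProduct.comm k A A x * TensorProduct.comm k A A y := by
  induction x using TensorProduct.induction_on with
  | zero => simp
  | tmul a b =>
    induction y using TensorProduct.induction_on with
    | zero => simp
    | tmul c d => simp [Algebra.TensorProduct.tmul_mul_tmul]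
    | add u v hu hv => simp only [mul_add, map_add, hu, hv]
  | add u v hu hv => simp only [add_mul, map_add, hu, hv]

lemma comm_comm' (x : A ⊗[k] A) :
    TensorProduct.comm k A A (TensorProduct.comm k A A x) = x := by
  induction x using TensorProduct.induction_on with
  | zero => simp
  | tmul a b => simp
  | add u v hu hv => simp [hu, hv]

lemma Qmat_comul_comm (R : A ⊗[k] A) (hR : IsRMatrix k A R) (x : A) :
    Qmat k A R * Coalgebra.comul (R := k) x
      = Coalgebra.comul (R := k) x * Qmat k A R := by
  have h := hR.quasi x
  have h2 : TensorProduct.comm k A A R * TensorProduct.comm k A A (Coalgebra.comul (R := k) x)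
      = Coalgebra.comul (R := k) x * TensorProduct.comm k A A R := by
    rw [← comm_mul', h, comm_mul', comm_comm']
  calc Qmat k A R * Coalgebra.comul (R := k) x
      = TensorProduct.comm k A A R * (R * Coalgebra.comul (R := k) x) := by
        rw [Qmat, mul_assoc]
    _ = TensorProduct.comm k A A R *
          (TensorProduct.comm k A A (Coalgebra.comul (R := k) x) * R) := by rw [h]
    _ = (TensorProduct.comm k A A R *
          TensorProduct.comm k A A (Coalgebra.comul (R := k) x)) * R :=
        (mul_assoc _ _ _).symm
    _ = (Coalgebra.comul (R := k) x * TensorProduct.comm k A A R) * R := by rw [h2]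
    _ = Coalgebra.comul (R := k) x * Qmat k A R := by rw [Qmat, mul_assoc]

end Helpers

/-- For a semisimple quasitriangular Hopf algebra `(A, R)` and
a normal Hopf subalgebra `L`, every element of `L* = φ_R((A//L)*)` commutes
with every element of `L`. -/
theorem Lstar_commutes_with_L
    {k : Type*} [Field k] [IsAlgClosed k] [CharZero k]
    {A : Type*} [Ring A] [HopfAlgebra k A] [FiniteDimensional k A] [IsSemisimpleRing A]
    (R : A ⊗[k] A) (hR : IsRMatrix k A R)
    (L : Subalgebra k A) (hL : IsNormalHopfSubalgebra L) :
    ∀ l ∈ L, ∀ m ∈ phiR k A R '' dualQuot (Subalgebra.toSubmodule L), m * l = l * m := by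
  rintro l hl m ⟨f, hf, rfl⟩
  classical
  obtain ⟨t, ht⟩ := hL.1.1 l hl
  obtain ⟨S, hS⟩ := TensorProduct.exists_finset (R := k) t
  have hΔ : Coalgebra.comul (R := k) l = ∑ p ∈ S, ((p.1 : A) ⊗ₜ[k] (p.2 : A)) := by
    rw [← ht, hS, map_sum]
    simp [TensorProduct.map_tmul]
  have hεl : ∑ p ∈ S, Coalgebra.counit (R := k) (p.1 : A) • (p.2 : A) = l := by
    have h := Coalgebra.rTensor_counit_comul (R := k) l
    rw [hΔ, map_sum] at h
    have h2 := congrArg (TensorProduct.lid k A) h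
    simpa [map_sum] using h2
  set F : A ⊗[k] A →ₗ[k] A :=
    (TensorProduct.lid k A).toLinearMap ∘ₗ LinearMap.rTensor A f with hF
  have hFt : ∀ u v : A, F (u ⊗ₜ[k] v) = f u • v := by
    intro u v
    simp [hF]
  have hm : phiR k A R f = F (Qmat k A R) := by
    simp [phiR, hF]
  have hA : ∀ q : A ⊗[k] A, F (q * Coalgebra.comul (R := k) l) = F q * l := by
    intro q
    induction q using TensorProduct.induction_on with
    | zero => simp
    | tmul u v =>
      rw [hΔ, Finset.mul_sum, map_sum, hFt, smul_mul_assoc]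
      simp only [Algebra.TensorProduct.tmul_mul_tmul, hFt]
      rw [← hεl, Finset.mul_sum, Finset.smul_sum]
      refine Finset.sum_congr rfl fun p _ => ?_
      rw [hf u _ p.1.2, mul_smul, smul_comm, mul_smul_comm]
    | add q q' h h' =>
      simp only [add_mul, map_add, h, h']
  have hB : ∀ q : A ⊗[k] A, F (Coalgebra.comul (R := k) l * q) = l * F q := by
    intro q
    induction q using TensorProduct.induction_on with
    | zero => simp
    | tmul u v =>
      rw [hΔ, Finset.sum_mul, map_sum, hFt]
      simp only [Algebra.TensorProduct.tmul_mul_tmul, hFt]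
      rw [mul_smul_comm, ← hεl, Finset.sum_mul, Finset.smul_sum]
      refine Finset.sum_congr rfl fun p _ => ?_
      rw [dualQuot_mul_left hL.2.2 hf p.1.2 u, mul_smul, smul_comm, smul_mul_assoc]
    | add q q' h h' =>
      simp only [mul_add, map_add, h, h']
  rw [hm]
  calc F (Qmat k A R) * l = F (Qmat k A R * Coalgebra.comul (R := k) l) := (hA _).symm
    _ = F (Coalgebra.comul (R := k) l * Qmat k A R) := by rw [Qmat_comul_comm R hR l]
    _ = l * F (Qmat k A R) := hB _
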